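/- There is an absolute constant C > 0 such that for all real x ≥ 2, ∑_{n ≤ x} #Ψ*(n) ≤ C x log x, where the sum is over positive integers n ≤ x. -/

import Mathlib

open Finset

/-- The number of divisors squared is at most `4 m`. -/
private lemma tau_sq_le_aux (m : ℕ) : m.divisors.card ^ 2 ≤ 4 * m := by
  rcases Nat.eq_zero_or_pos m with rfl | hm
  · simp
  have hm0 : m ≠ 0 := hm.ne'
  set r := Nat.sqrt m with hr
  have h1 : (m.divisors.filter (fun d => d ≤ r)).card ≤ r := by
    have hsub : m.divisors.filter (fun d => d ≤ r) ⊆ Finset.Icc 1 r := by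
      intro d hd
      simp only [Finset.mem_filter, Nat.mem_divisors] at hd
      exact Finset.mem_Icc.mpr ⟨Nat.pos_of_dvd_of_pos hd.1.1 hm, hd.2⟩
    simpa using Finset.card_le_card hsub
  have h2 : (m.divisors.filter (fun d => ¬ d ≤ r)).card ≤ r := by
    have hle : (m.divisors.filter (fun d => ¬ d ≤ r)).card ≤ (Finset.Icc 1 r).card := by
      apply Finset.card_le_card_of_injOn (fun d => m / d)
      · intro d hd
        simp only [Finset.mem_coe, Finset.mem_filter, Nat.mem_divisors, not_le] at hd
        obtain ⟨⟨hdvd, -⟩, hdr⟩ := hd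
        have hd0 : 0 < d := Nat.pos_of_dvd_of_pos hdvd hm
        refine Finset.mem_Icc.mpr ⟨(Nat.one_le_div_iff hd0).mpr (Nat.le_of_dvd hm hdvd), ?_⟩
        by_contra hcon
        push_neg at hcon
        have h3 : (r + 1) * (r + 1) ≤ d * (m / d) := Nat.mul_le_mul hdr hcon
        rw [Nat.mul_div_cancel' hdvd] at h3
        have h4 : m < (r + 1) * (r + 1) := Nat.lt_succ_sqrt m
        omega
      · intro a ha b hb hab
        simp only [Finset.coe_filter, Set.mem_setOf_eq, Nat.mem_divisors] at ha hb
        have ha' := Nat.div_div_self ha.1.1 hm0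
        have hb' := Nat.div_div_self hb.1.1 hm0
        simp only at hab
        rw [← ha', ← hb', hab]
    simpa using hle
  have hsplit : (m.divisors.filter (fun d => d ≤ r)).card
      + (m.divisors.filter (fun d => ¬ d ≤ r)).card = m.divisors.card :=
    Finset.card_filter_add_card_filter_not (fun d => d ≤ r)
  have htau : m.divisors.card ≤ 2 * r := by omega
  have hrr : r * r ≤ m := Nat.sqrt_le m
  nlinarith [htau, hrr]

/-- `m ≤ 4 φ(m)²` for `m ≥ 1`. -/
private lemma m_le_four_totient_sq (m : ℕ) (hm : 1 ≤ m) : m ≤ 4 * m.totient ^ 2 := by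
  have hφ : 0 < m.totient := Nat.totient_pos.mpr hm
  have h1 : m ≤ m.divisors.card * m.totient := by
    conv_lhs => rw [← Nat.sum_totient m]
    have h := Finset.sum_le_card_nsmul m.divisors Nat.totient m.totient
      (fun d hd => Nat.le_of_dvd hφ (Nat.totient_dvd_of_dvd (Nat.dvd_of_mem_divisors hd)))
    simpa [smul_eq_mul] using h
  have h2 := tau_sq_le_aux m
  have h3 : m * m ≤ (m.divisors.card * m.totient) * (m.divisors.card * m.totient) :=
    Nat.mul_le_mul h1 h1
  have h4 : (m.divisors.card * m.totient) * (m.divisors.card * m.totient)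
      = m.divisors.card ^ 2 * m.totient ^ 2 := by ring
  have h5 : m.divisors.card ^ 2 * m.totient ^ 2 ≤ (4 * m) * m.totient ^ 2 :=
    Nat.mul_le_mul_right _ h2
  have h6 : m * m ≤ (4 * m.totient ^ 2) * m := by
    calc m * m ≤ m.divisors.card ^ 2 * m.totient ^ 2 := by rw [← h4]; exact h3
      _ ≤ (4 * m) * m.totient ^ 2 := h5
      _ = (4 * m.totient ^ 2) * m := by ring
  exact Nat.le_of_mul_le_mul_right h6 hm

/-- Key pointwise bound: `1/φ(m) ≤ ∑_{d ∣ m} 1/(m φ(d))`. -/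
private lemma one_div_totient_le (m : ℕ) (hm : 1 ≤ m) :
    (1 : ℝ) / (m.totient : ℝ)
      ≤ ∑ d ∈ m.divisors, 1 / ((m : ℝ) * (d.totient : ℝ)) := by
  have hm0 : (0 : ℝ) < m := by exact_mod_cast hm
  have hφm : 0 < m.totient := Nat.totient_pos.mpr hm
  have hφm' : (0 : ℝ) < (m.totient : ℝ) := by exact_mod_cast hφm
  have key : (m : ℝ) ≤ ∑ d ∈ m.divisors, (m.totient : ℝ) / (d.totient : ℝ) := by
    have h0 : (m : ℝ) = ∑ d ∈ m.divisors, (((m / d).totient : ℕ) : ℝ) := by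
      have h : ∑ d ∈ m.divisors, (m / d).totient = m := by
        rw [Nat.sum_div_divisors m Nat.totient, Nat.sum_totient]
      exact_mod_cast h.symm
    rw [h0]
    apply Finset.sum_le_sum
    intro d hd
    have hdvd : d ∣ m := Nat.dvd_of_mem_divisors hd
    have hd0 : 0 < d := Nat.pos_of_dvd_of_pos hdvd hm
    have hφd : (0 : ℝ) < (d.totient : ℝ) := by
      exact_mod_cast Nat.totient_pos.mpr hd0
    rw [le_div_iff₀ hφd]
    have hsm := Nat.totient_super_multiplicative d (m / d)
    rw [Nat.mul_div_cancel' hdvd] at hsm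
    calc ((m / d).totient : ℝ) * (d.totient : ℝ)
        = ((d.totient * (m / d).totient : ℕ) : ℝ) := by push_cast; ring
      _ ≤ (m.totient : ℝ) := by exact_mod_cast hsm
  have hrw : ∑ d ∈ m.divisors, (1 : ℝ) / ((m : ℝ) * (d.totient : ℝ))
      = (∑ d ∈ m.divisors, (m.totient : ℝ) / (d.totient : ℝ)) / ((m : ℝ) * (m.totient : ℝ)) := by
    rw [Finset.sum_div]
    apply Finset.sum_congr rfl
    intro d hd
    have hd0 : 0 < d := Nat.pos_of_dvd_of_pos (Nat.dvd_of_mem_divisors hd) hm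
    have hφd : (0 : ℝ) < (d.totient : ℝ) := by exact_mod_cast Nat.totient_pos.mpr hd0
    rw [div_div]
    rw [div_eq_div_iff (by positivity) (by positivity)]
    ring
  rw [hrw, le_div_iff₀ (by positivity)]
  calc (1 : ℝ) / (m.totient : ℝ) * ((m : ℝ) * (m.totient : ℝ)) = (m : ℝ) := by
        field_simp
    _ ≤ _ := key

/-- Swapping a divisor sum into a double sum (inequality form, nonneg terms). -/
private lemma swap_divisor_sum (M : ℕ) (G : ℕ → ℕ → ℝ) (hG : ∀ a b, 0 ≤ G a b) :
    ∑ m ∈ Finset.Icc 1 M, ∑ d ∈ m.divisors, G d (m / d)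
      ≤ ∑ d ∈ Finset.Icc 1 M, ∑ e ∈ Finset.Icc 1 M, G d e := by
  have h1 : ∀ m ∈ Finset.Icc 1 M, ∑ d ∈ m.divisors, G d (m / d)
      = ∑ p ∈ m.divisorsAntidiagonal, G p.1 p.2 := fun m _ =>
    (Nat.sum_divisorsAntidiagonal G).symm
  rw [Finset.sum_congr rfl h1]
  have hdisj : (Finset.Icc 1 M : Set ℕ).PairwiseDisjoint
      (fun m => Nat.divisorsAntidiagonal m) := by
    intro a _ b _ hab
    simp only [Finset.disjoint_left]
    intro p hpa hpb
    rw [Nat.mem_divisorsAntidiagonal] at hpa hpb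
    exact hab (hpa.1.symm.trans hpb.1)
  rw [← Finset.sum_biUnion hdisj]
  have hsub : (Finset.Icc 1 M).biUnion (fun m => Nat.divisorsAntidiagonal m)
      ⊆ Finset.Icc 1 M ×ˢ Finset.Icc 1 M := by
    intro p hp
    simp only [Finset.mem_biUnion] at hp
    obtain ⟨m, hm, hpm⟩ := hp
    rw [Nat.mem_divisorsAntidiagonal] at hpm
    rw [Finset.mem_Icc] at hm
    obtain ⟨hpe, hm0⟩ := hpm
    have h1' : 0 < p.1 := by
      rcases Nat.eq_zero_or_pos p.1 with h | h
      · exfalso; apply hm0; rw [← hpe, h, Nat.zero_mul]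
      · exact h
    have h2' : 0 < p.2 := by
      rcases Nat.eq_zero_or_pos p.2 with h | h
      · exfalso; apply hm0; rw [← hpe, h, Nat.mul_zero]
      · exact h
    have hle1 : p.1 ≤ M := by
      calc p.1 ≤ p.1 * p.2 := Nat.le_mul_of_pos_right _ h2'
        _ = m := hpe
        _ ≤ M := hm.2
    have hle2 : p.2 ≤ M := by
      calc p.2 ≤ p.1 * p.2 := Nat.le_mul_of_pos_left _ h1'
        _ = m := hpe
        _ ≤ M := hm.2
    simp only [Finset.mem_product, Finset.mem_Icc]
    exact ⟨⟨h1', hle1⟩, ⟨h2', hle2⟩⟩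
  calc ∑ p ∈ (Finset.Icc 1 M).biUnion (fun m => Nat.divisorsAntidiagonal m), G p.1 p.2
      ≤ ∑ p ∈ Finset.Icc 1 M ×ˢ Finset.Icc 1 M, G p.1 p.2 :=
        Finset.sum_le_sum_of_subset_of_nonneg hsub (fun p _ _ => hG p.1 p.2)
    _ = ∑ d ∈ Finset.Icc 1 M, ∑ e ∈ Finset.Icc 1 M, G d e := Finset.sum_product _ _ _

private lemma sum_inv_sq_le (M : ℕ) : ∑ b ∈ Finset.Icc 1 M, (1 : ℝ) / (b : ℝ) ^ 2 ≤ 2 := by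
  simp only [one_div]
  rcases Nat.eq_zero_or_pos M with rfl | hM
  · norm_num
  have hsplit : Finset.Icc 1 M = insert 1 (Finset.Ioc 1 M) := by
    ext a
    simp only [Finset.mem_Icc, Finset.mem_insert, Finset.mem_Ioc]
    omega
  rw [hsplit, Finset.sum_insert (by simp)]
  have h1 : ∑ b ∈ Finset.Ioc 1 M, ((b : ℝ) ^ 2)⁻¹ ≤ 1 := by
    rcases le_or_gt M 1 with h | h
    · rw [Finset.Ioc_eq_empty (by omega)]; simp
    · have hM0 : (0 : ℝ) < (M : ℝ) := by exact_mod_cast hM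
      have hs := sum_Ioc_inv_sq_le_sub (α := ℝ) (k := 1) (n := M) one_ne_zero h.le
      simp only [Nat.cast_one, inv_one] at hs
      have hMinv : (0 : ℝ) ≤ ((M : ℝ))⁻¹ := by positivity
      linarith
  norm_num
  linarith

private lemma sum_harmonic_le (M : ℕ) :
    ∑ e ∈ Finset.Icc 1 M, (1 : ℝ) / (e : ℝ) ≤ 1 + Real.log M := by
  have h := harmonic_le_one_add_log M
  rw [harmonic_eq_sum_Icc] at h
  have heq : ((∑ i ∈ Finset.Icc 1 M, (i : ℚ)⁻¹ : ℚ) : ℝ)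
      = ∑ e ∈ Finset.Icc 1 M, (1 : ℝ) / (e : ℝ) := by
    push_cast
    simp [one_div]
  rw [heq] at h
  exact h

/-- `∑_{d ≤ M} 1/(d φ(d)) ≤ 4`. -/
private lemma sum_inv_d_totient_le (M : ℕ) :
    ∑ d ∈ Finset.Icc 1 M, (1 : ℝ) / ((d : ℝ) * (d.totient : ℝ)) ≤ 4 := by
  have step1 : ∑ d ∈ Finset.Icc 1 M, (1 : ℝ) / ((d : ℝ) * (d.totient : ℝ))
      ≤ ∑ d ∈ Finset.Icc 1 M, ∑ a ∈ d.divisors,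
          (1 : ℝ) / (((a : ℝ) * (((d / a : ℕ)) : ℝ)) ^ 2 * (a.totient : ℝ)) := by
    apply Finset.sum_le_sum
    intro d hd
    rw [Finset.mem_Icc] at hd
    have hd1 : 1 ≤ d := hd.1
    have hd0 : (0 : ℝ) < (d : ℝ) := by exact_mod_cast hd1
    have key := one_div_totient_le d hd1
    have h2 : (1 : ℝ) / ((d : ℝ) * (d.totient : ℝ))
        ≤ ∑ a ∈ d.divisors, (1 : ℝ) / ((d : ℝ) ^ 2 * (a.totient : ℝ)) := by
      have hmul := mul_le_mul_of_nonneg_right key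
        (by positivity : (0 : ℝ) ≤ 1 / (d : ℝ))
      have hφd : (0 : ℝ) < (d.totient : ℝ) := by
        exact_mod_cast Nat.totient_pos.mpr hd1
      calc (1 : ℝ) / ((d : ℝ) * (d.totient : ℝ))
          = (1 / (d.totient : ℝ)) * (1 / (d : ℝ)) := by
            rw [one_div_mul_one_div, mul_comm (d : ℝ)]
        _ ≤ (∑ a ∈ d.divisors, 1 / ((d : ℝ) * (a.totient : ℝ))) * (1 / (d : ℝ)) := hmul
        _ = ∑ a ∈ d.divisors, (1 : ℝ) / ((d : ℝ) ^ 2 * (a.totient : ℝ)) := by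
            rw [Finset.sum_mul]
            apply Finset.sum_congr rfl
            intro a ha
            have ha0 : 0 < a := Nat.pos_of_dvd_of_pos (Nat.dvd_of_mem_divisors ha) hd1
            have hφa : (0 : ℝ) < (a.totient : ℝ) := by
              exact_mod_cast Nat.totient_pos.mpr ha0
            rw [one_div_mul_one_div]
            congr 1
            ring
    refine h2.trans (le_of_eq ?_)
    apply Finset.sum_congr rfl
    intro a ha
    have hdvd : a ∣ d := Nat.dvd_of_mem_divisors ha
    have hcast : (a : ℝ) * (((d / a : ℕ)) : ℝ) = (d : ℝ) := by
      rw [← Nat.cast_mul, Nat.mul_div_cancel' hdvd]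
    rw [hcast]
  have step2 : ∑ d ∈ Finset.Icc 1 M, ∑ a ∈ d.divisors,
        (1 : ℝ) / (((a : ℝ) * (((d / a : ℕ)) : ℝ)) ^ 2 * (a.totient : ℝ))
      ≤ ∑ a ∈ Finset.Icc 1 M, ∑ b ∈ Finset.Icc 1 M,
          (1 : ℝ) / (((a : ℝ) * (b : ℝ)) ^ 2 * (a.totient : ℝ)) :=
    swap_divisor_sum M (fun a b => (1 : ℝ) / (((a : ℝ) * (b : ℝ)) ^ 2 * (a.totient : ℝ)))
      (fun a b => by positivity)
  have step3 : ∑ a ∈ Finset.Icc 1 M, ∑ b ∈ Finset.Icc 1 M,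
        (1 : ℝ) / (((a : ℝ) * (b : ℝ)) ^ 2 * (a.totient : ℝ)) ≤ 4 := by
    have heq : ∀ a ∈ Finset.Icc 1 M,
        ∑ b ∈ Finset.Icc 1 M, (1 : ℝ) / (((a : ℝ) * (b : ℝ)) ^ 2 * (a.totient : ℝ))
        = (1 / ((a : ℝ) ^ 2 * (a.totient : ℝ))) * ∑ b ∈ Finset.Icc 1 M, (1 : ℝ) / (b : ℝ) ^ 2 := by
      intro a ha
      rw [Finset.mul_sum]
      apply Finset.sum_congr rfl
      intro b hb
      rw [Finset.mem_Icc] at ha hb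
      have ha0 : (0 : ℝ) < (a : ℝ) := by exact_mod_cast ha.1
      have hb0 : (0 : ℝ) < (b : ℝ) := by exact_mod_cast hb.1
      have hφ : (0 : ℝ) < (a.totient : ℝ) := by
        exact_mod_cast Nat.totient_pos.mpr ha.1
      rw [one_div_mul_one_div]
      congr 1
      ring
    rw [Finset.sum_congr rfl heq]
    have hbound : ∀ a ∈ Finset.Icc 1 M,
        (1 / ((a : ℝ) ^ 2 * (a.totient : ℝ))) * ∑ b ∈ Finset.Icc 1 M, (1 : ℝ) / (b : ℝ) ^ 2
        ≤ (1 / (a : ℝ) ^ 2) * 2 := by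
      intro a ha
      rw [Finset.mem_Icc] at ha
      have ha0 : (0 : ℝ) < (a : ℝ) := by exact_mod_cast ha.1
      have hφ1 : (1 : ℝ) ≤ (a.totient : ℝ) := by
        exact_mod_cast Nat.totient_pos.mpr ha.1
      apply mul_le_mul
      · rw [div_le_div_iff₀ (by positivity) (by positivity)]
        nlinarith [sq_nonneg (a : ℝ)]
      · exact sum_inv_sq_le M
      · positivity
      · positivity
    calc ∑ a ∈ Finset.Icc 1 M,
          (1 / ((a : ℝ) ^ 2 * (a.totient : ℝ))) * ∑ b ∈ Finset.Icc 1 M, (1 : ℝ) / (b : ℝ) ^ 2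
        ≤ ∑ a ∈ Finset.Icc 1 M, (1 / (a : ℝ) ^ 2) * 2 := Finset.sum_le_sum hbound
      _ = (∑ a ∈ Finset.Icc 1 M, (1 : ℝ) / (a : ℝ) ^ 2) * 2 := by rw [Finset.sum_mul]
      _ ≤ 2 * 2 := by nlinarith [sum_inv_sq_le M]
      _ = 4 := by norm_num
  linarith

/-- `∑_{m ≤ M} 1/φ(m) ≤ 4 (1 + log M)`. -/
private lemma sum_one_div_totient_le (M : ℕ) :
    ∑ m ∈ Finset.Icc 1 M, (1 : ℝ) / (m.totient : ℝ) ≤ 4 * (1 + Real.log M) := by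
  have step1 : ∑ m ∈ Finset.Icc 1 M, (1 : ℝ) / (m.totient : ℝ)
      ≤ ∑ m ∈ Finset.Icc 1 M, ∑ d ∈ m.divisors,
          (1 : ℝ) / (((d : ℝ) * (((m / d : ℕ)) : ℝ)) * (d.totient : ℝ)) := by
    apply Finset.sum_le_sum
    intro m hm
    rw [Finset.mem_Icc] at hm
    refine (one_div_totient_le m hm.1).trans (le_of_eq ?_)
    apply Finset.sum_congr rfl
    intro d hd
    have hcast : (d : ℝ) * (((m / d : ℕ)) : ℝ) = (m : ℝ) := by
      rw [← Nat.cast_mul, Nat.mul_div_cancel' (Nat.dvd_of_mem_divisors hd)]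
    rw [hcast]
  have step2 : ∑ m ∈ Finset.Icc 1 M, ∑ d ∈ m.divisors,
        (1 : ℝ) / (((d : ℝ) * (((m / d : ℕ)) : ℝ)) * (d.totient : ℝ))
      ≤ ∑ d ∈ Finset.Icc 1 M, ∑ e ∈ Finset.Icc 1 M,
          (1 : ℝ) / (((d : ℝ) * (e : ℝ)) * (d.totient : ℝ)) :=
    swap_divisor_sum M (fun d e => (1 : ℝ) / (((d : ℝ) * (e : ℝ)) * (d.totient : ℝ)))
      (fun d e => by positivity)
  have step3 : ∑ d ∈ Finset.Icc 1 M, ∑ e ∈ Finset.Icc 1 M,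
        (1 : ℝ) / (((d : ℝ) * (e : ℝ)) * (d.totient : ℝ))
      ≤ 4 * (1 + Real.log M) := by
    have heq : ∀ d ∈ Finset.Icc 1 M,
        ∑ e ∈ Finset.Icc 1 M, (1 : ℝ) / (((d : ℝ) * (e : ℝ)) * (d.totient : ℝ))
        = (1 / ((d : ℝ) * (d.totient : ℝ))) * ∑ e ∈ Finset.Icc 1 M, (1 : ℝ) / (e : ℝ) := by
      intro d hd
      rw [Finset.mul_sum]
      apply Finset.sum_congr rfl
      intro e he
      rw [one_div_mul_one_div]
      congr 1
      ring
    rw [Finset.sum_congr rfl heq]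
    have hharm : ∑ e ∈ Finset.Icc 1 M, (1 : ℝ) / (e : ℝ) ≤ 1 + Real.log M :=
      sum_harmonic_le M
    have hharm0 : (0 : ℝ) ≤ ∑ e ∈ Finset.Icc 1 M, (1 : ℝ) / (e : ℝ) := by positivity
    have hlog0 : (0 : ℝ) ≤ 1 + Real.log M := le_trans hharm0 hharm
    have hsum4 := sum_inv_d_totient_le M
    have hsum0 : (0 : ℝ) ≤ ∑ d ∈ Finset.Icc 1 M, (1 : ℝ) / ((d : ℝ) * (d.totient : ℝ)) := by
      positivity
    calc ∑ d ∈ Finset.Icc 1 M,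
          (1 / ((d : ℝ) * (d.totient : ℝ))) * ∑ e ∈ Finset.Icc 1 M, (1 : ℝ) / (e : ℝ)
        = (∑ d ∈ Finset.Icc 1 M, (1 : ℝ) / ((d : ℝ) * (d.totient : ℝ)))
            * ∑ e ∈ Finset.Icc 1 M, (1 : ℝ) / (e : ℝ) := by rw [Finset.sum_mul]
      _ ≤ 4 * (1 + Real.log M) :=
          mul_le_mul hsum4 hharm hharm0 (by norm_num)
  linarith

/-- There is an absolute constant `C > 0` such that for all real `x ≥ 2`,
`∑_{n ≤ x} #Ψ*(n) ≤ C x log x`, where `Ψ*(n) = {m ≥ 1 : φ(m) ∣ n}`. -/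
theorem sum_card_psiStar_le :
    ∃ C : ℝ, 0 < C ∧ ∀ x : ℝ, 2 ≤ x →
      ∑ n ∈ Finset.Icc 1 ⌊x⌋₊, ({m : ℕ | 0 < m ∧ m.totient ∣ n}.ncard : ℝ)
        ≤ C * x * Real.log x := by
  refine ⟨24, by norm_num, fun x hx => ?_⟩
  have hx0 : (0 : ℝ) < x := lt_of_lt_of_le (by norm_num) hx
  set N := ⌊x⌋₊ with hN
  have hN2 : 2 ≤ N := Nat.le_floor (by exact_mod_cast hx)
  have hN1 : 1 ≤ N := by omega
  set B := 4 * N ^ 2 with hB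
  have hB1 : 1 ≤ B := by rw [hB]; nlinarith [hN1]
  -- identify the set with a finset
  have hset : ∀ n ∈ Finset.Icc 1 N, {m : ℕ | 0 < m ∧ m.totient ∣ n}
      = ↑((Finset.Icc 1 B).filter (fun m => m.totient ∣ n)) := by
    intro n hn
    rw [Finset.mem_Icc] at hn
    ext m
    simp only [Set.mem_setOf_eq, Finset.coe_filter, Set.mem_setOf_eq, Finset.mem_Icc]
    constructor
    · rintro ⟨hm0, hdvd⟩
      refine ⟨⟨hm0, ?_⟩, hdvd⟩
      have h1 : m.totient ≤ n := Nat.le_of_dvd (by omega) hdvd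
      calc m ≤ 4 * m.totient ^ 2 := m_le_four_totient_sq m hm0
        _ ≤ 4 * n ^ 2 := by nlinarith
        _ ≤ B := by rw [hB]; nlinarith [hn.2]
    · rintro ⟨⟨hm1, _⟩, hdvd⟩
      exact ⟨hm1, hdvd⟩
  have hcard : ∀ n ∈ Finset.Icc 1 N, ({m : ℕ | 0 < m ∧ m.totient ∣ n}.ncard : ℝ)
      = (((Finset.Icc 1 B).filter (fun m => m.totient ∣ n)).card : ℝ) := by
    intro n hn
    rw [hset n hn, Set.ncard_coe_finset]
  rw [Finset.sum_congr rfl hcard]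
  -- double counting
  have hswap : ∑ n ∈ Finset.Icc 1 N, ((Finset.Icc 1 B).filter (fun m => m.totient ∣ n)).card
      = ∑ m ∈ Finset.Icc 1 B, ((Finset.Icc 1 N).filter (fun n => m.totient ∣ n)).card := by
    simp_rw [Finset.card_filter]
    exact Finset.sum_comm
  have hdivcount : ∀ m : ℕ, ((Finset.Icc 1 N).filter (fun n => m.totient ∣ n)).card
      = N / m.totient := by
    intro m
    have hIcc : Finset.Icc 1 N = Finset.Ioc 0 N := by
      ext a
      simp only [Finset.mem_Icc, Finset.mem_Ioc]
      omega
    rw [hIcc]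
    exact Nat.Ioc_filter_dvd_card_eq_div N m.totient
  have hmain : ∑ n ∈ Finset.Icc 1 N, (((Finset.Icc 1 B).filter (fun m => m.totient ∣ n)).card : ℝ)
      ≤ (N : ℝ) * (4 * (1 + Real.log B)) := by
    have h1 : ∑ n ∈ Finset.Icc 1 N,
          (((Finset.Icc 1 B).filter (fun m => m.totient ∣ n)).card : ℝ)
        = ∑ m ∈ Finset.Icc 1 B, ((N / m.totient : ℕ) : ℝ) := by
      rw [← Nat.cast_sum, hswap, Finset.sum_congr rfl (fun m _ => hdivcount m), Nat.cast_sum]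
    rw [h1]
    have h2 : ∑ m ∈ Finset.Icc 1 B, ((N / m.totient : ℕ) : ℝ)
        ≤ ∑ m ∈ Finset.Icc 1 B, (N : ℝ) * (1 / (m.totient : ℝ)) := by
      apply Finset.sum_le_sum
      intro m hm
      calc ((N / m.totient : ℕ) : ℝ) ≤ (N : ℝ) / (m.totient : ℝ) := Nat.cast_div_le
        _ = (N : ℝ) * (1 / (m.totient : ℝ)) := by ring
    have h4 := sum_one_div_totient_le B
    have hN0 : (0 : ℝ) ≤ (N : ℝ) := by positivity
    calc ∑ m ∈ Finset.Icc 1 B, ((N / m.totient : ℕ) : ℝ)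
        ≤ ∑ m ∈ Finset.Icc 1 B, (N : ℝ) * (1 / (m.totient : ℝ)) := h2
      _ = (N : ℝ) * ∑ m ∈ Finset.Icc 1 B, (1 : ℝ) / (m.totient : ℝ) := by
          rw [Finset.mul_sum]
      _ ≤ (N : ℝ) * (4 * (1 + Real.log B)) := mul_le_mul_of_nonneg_left h4 hN0
  -- final log estimates
  have hlogx : Real.log 2 ≤ Real.log x := Real.log_le_log (by norm_num) hx
  have hlog2 : (0.693 : ℝ) < Real.log 2 := by
    have := Real.log_two_gt_d9
    linarith
  have hlogx0 : (0 : ℝ) < Real.log x := by linarith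
  have hNx : (N : ℝ) ≤ x := Nat.floor_le (by linarith)
  have hN0' : (0 : ℝ) ≤ (N : ℝ) := by positivity
  have hone_le : (1 : ℝ) ≤ 2 * Real.log x := by linarith
  have hlogB : Real.log B ≤ Real.log 4 + 2 * Real.log x := by
    have hBle : (B : ℝ) ≤ 4 * x ^ 2 := by
      rw [hB]
      push_cast
      nlinarith [hNx, hN0']
    have hB0 : (0 : ℝ) < (B : ℝ) := by
      have h : 0 < B := hB1
      exact_mod_cast h
    calc Real.log B ≤ Real.log (4 * x ^ 2) := Real.log_le_log hB0 hBle
      _ = Real.log 4 + Real.log (x ^ 2) := Real.log_mul (by norm_num) (by positivity)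
      _ = Real.log 4 + 2 * Real.log x := by rw [Real.log_pow]; push_cast; ring
  have hlog4 : Real.log 4 ≤ 2 * Real.log x := by
    have h4 : Real.log 4 = 2 * Real.log 2 := by
      rw [show (4 : ℝ) = 2 ^ 2 by norm_num, Real.log_pow]
      push_cast; ring
    rw [h4]
    linarith
  have hfinal : (N : ℝ) * (4 * (1 + Real.log B)) ≤ 24 * x * Real.log x := by
    have h5 : 1 + Real.log B ≤ 6 * Real.log x := by linarith
    calc (N : ℝ) * (4 * (1 + Real.log B)) ≤ (N : ℝ) * (4 * (6 * Real.log x)) :=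
          mul_le_mul_of_nonneg_left (by linarith) hN0'
      _ = 24 * (N : ℝ) * Real.log x := by ring
      _ ≤ 24 * x * Real.log x :=
          mul_le_mul_of_nonneg_right (by linarith) (le_of_lt hlogx0)
  linarith
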